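/- If f : ℤ^n → ℝ ∪ {+∞} is L♮-convex, then f is submodular: f(x) + f(y) ≥ f(x ∨ y) + f(x ∧ y) for all x, y ∈ ℤ^n, where ∨ and ∧ are componentwise max and min. -/

import Mathlib

/-- Componentwise rounded-up midpoint `⌈(x+y)/2⌉` of two integer vectors. -/
def ceilMid {n : ℕ} (x y : Fin n → ℤ) : Fin n → ℤ := fun i => Int.fdiv (x i + y i + 1) 2

/-- Componentwise rounded-down midpoint `⌊(x+y)/2⌋` of two integer vectors. -/
def floorMid {n : ℕ} (x y : Fin n → ℤ) : Fin n → ℤ := fun i => Int.fdiv (x i + y i) 2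

/-- A function `f : ℤⁿ → ℝ ∪ {+∞}` (encoded into `EReal`) with nonempty effective
domain is L♮-convex if it satisfies discrete midpoint convexity. -/
def IsLNatFn {n : ℕ} (f : (Fin n → ℤ) → EReal) : Prop :=
  (∃ x, f x ≠ ⊤) ∧ ∀ x y, f (ceilMid x y) + f (floorMid x y) ≤ f x + f y

private lemma lnat_aux {n : ℕ} (f : (Fin n → ℤ) → EReal)
    (hfbot : ∀ x, f x ≠ ⊥) (hf : IsLNatFn f) :
    ∀ N : ℕ, ∀ x y : Fin n → ℤ, (∀ i, (x i - y i).natAbs ≤ N) →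
      f (x ⊔ y) + f (x ⊓ y) ≤ f x + f y := by
  intro N
  induction N using Nat.strong_induction_on with
  | _ N IH =>
  intro x y hxy
  rcases le_or_gt N 1 with hN | hN
  · -- base case: x ⊔ y and x ⊓ y are exactly the rounded midpoints
    have h1 : x ⊔ y = ceilMid x y := by
      funext i
      have hi := hxy i
      simp only [Pi.sup_apply, ceilMid,
        Int.fdiv_eq_ediv_of_nonneg _ (by norm_num : (0:ℤ) ≤ 2)]
      omega
    have h2 : x ⊓ y = floorMid x y := by
      funext i
      have hi := hxy i
      simp only [Pi.inf_apply, floorMid,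
        Int.fdiv_eq_ediv_of_nonneg _ (by norm_num : (0:ℤ) ≤ 2)]
      omega
    rw [h1, h2]
    exact hf.2 x y
  · -- inductive step
    set p := ceilMid x y with hp
    set q := floorMid x y with hq
    set m1 := (fun i => if y i ≤ x i then p i else q i) with hm1
    set m2 := (fun i => if y i ≤ x i then q i else p i) with hm2
    have hpq : ∀ i, p i + q i = x i + y i ∧ q i ≤ p i ∧ p i ≤ q i + 1 := by
      intro i
      rw [hp, hq]
      simp only [ceilMid, floorMid, Int.fdiv_eq_ediv_of_nonneg _ (by norm_num : (0:ℤ) ≤ 2)]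
      omega
    set M := (N + 1) / 2 with hM
    have hMN : M < N := by omega
    -- distance bounds for the four IH applications
    have b1 : ∀ i, (x i - p i).natAbs ≤ M := by
      intro i; have h1 := hxy i; have h2 := hpq i; omega
    have b2 : ∀ i, (y i - q i).natAbs ≤ M := by
      intro i; have h1 := hxy i; have h2 := hpq i; omega
    have b3 : ∀ i, ((x ⊔ p) i - (y ⊔ q) i).natAbs ≤ M := by
      intro i; have h1 := hxy i; have h2 := hpq i
      simp only [Pi.sup_apply]; omega
    have b4 : ∀ i, ((x ⊓ p) i - (y ⊓ q) i).natAbs ≤ M := by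
      intro i; have h1 := hxy i; have h2 := hpq i
      simp only [Pi.inf_apply]; omega
    have h1 := IH M hMN x p b1
    have h2 := IH M hMN y q b2
    have h3 := IH M hMN (x ⊔ p) (y ⊔ q) b3
    have h4 := IH M hMN (x ⊓ p) (y ⊓ q) b4
    -- lattice identities
    have e1 : (x ⊔ p) ⊔ (y ⊔ q) = x ⊔ y := by
      funext i; have h := hpq i; have h' := hxy i
      simp only [Pi.sup_apply]; omega
    have e2 : (x ⊔ p) ⊓ (y ⊔ q) = m2 := by
      funext i; have h := hpq i
      rw [hm2]
      simp only [Pi.sup_apply, Pi.inf_apply]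
      by_cases hc : y i ≤ x i <;> simp only [hc, if_true, if_false] <;> omega
    have e3 : (x ⊓ p) ⊔ (y ⊓ q) = m1 := by
      funext i; have h := hpq i
      rw [hm1]
      simp only [Pi.sup_apply, Pi.inf_apply]
      by_cases hc : y i ≤ x i <;> simp only [hc, if_true, if_false] <;> omega
    have e4 : (x ⊓ p) ⊓ (y ⊓ q) = x ⊓ y := by
      funext i; have h := hpq i; have h' := hxy i
      simp only [Pi.inf_apply]; omega
    have hsum : ∀ i, m1 i + m2 i = x i + y i := by
      intro i; have h := hpq i
      rw [hm1, hm2]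
      by_cases hc : y i ≤ x i <;> simp only [hc, if_true, if_false] <;> omega
    have e5 : ceilMid m1 m2 = p := by
      rw [hp]; funext i; unfold ceilMid; rw [hsum i]
    have e6 : floorMid m1 m2 = q := by
      rw [hq]; funext i; unfold floorMid; rw [hsum i]
    rw [e1, e2] at h3
    rw [e3, e4] at h4
    have h5 : f p + f q ≤ f m1 + f m2 := by
      have := hf.2 m1 m2; rwa [e5, e6] at this
    have hxyle : f p + f q ≤ f x + f y := by
      have := hf.2 x y; rwa [← hp, ← hq] at this
    have key : (f (x ⊔ y) + f (x ⊓ y)) + (f m1 + f m2) ≤ (f x + f y) + (f p + f q) := by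
      calc (f (x ⊔ y) + f (x ⊓ y)) + (f m1 + f m2)
          = (f (x ⊔ y) + f m2) + (f m1 + f (x ⊓ y)) := by abel
        _ ≤ (f (x ⊔ p) + f (y ⊔ q)) + (f (x ⊓ p) + f (y ⊓ q)) := add_le_add h3 h4
        _ = (f (x ⊔ p) + f (x ⊓ p)) + (f (y ⊔ q) + f (y ⊓ q)) := by abel
        _ ≤ (f x + f p) + (f y + f q) := add_le_add h1 h2
        _ = (f x + f y) + (f p + f q) := by abel
    by_cases htop : f x + f y = ⊤
    · rw [htop]; exact le_top
    · have hpqtop : f p + f q ≠ ⊤ := ne_top_of_le_ne_top htop hxyle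
      have hrhs : (f x + f y) + (f p + f q) ≠ ⊤ := (EReal.add_lt_top htop hpqtop).ne
      have hlhs : (f (x ⊔ y) + f (x ⊓ y)) + (f m1 + f m2) ≠ ⊤ :=
        ne_top_of_le_ne_top hrhs key
      have hSbot : f (x ⊔ y) + f (x ⊓ y) ≠ ⊥ := by
        simp [EReal.add_eq_bot_iff, hfbot]
      have hmtop : f m1 + f m2 ≠ ⊤ := by
        intro h
        apply hlhs
        rw [h, EReal.add_top_iff_ne_bot]
        exact hSbot
      have hmbot : f m1 + f m2 ≠ ⊥ := by
        simp [EReal.add_eq_bot_iff, hfbot]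
      obtain ⟨c, hc⟩ : ∃ c : ℝ, (c : EReal) = f m1 + f m2 :=
        ⟨(f m1 + f m2).toReal, EReal.coe_toReal hmtop hmbot⟩
      have key2 : (f (x ⊔ y) + f (x ⊓ y)) + (c : EReal) ≤ (f x + f y) + (c : EReal) := by
        rw [hc]
        exact key.trans (add_le_add_right h5 _)
      exact (EReal.addLECancellable_coe c).add_le_add_iff_right.mp key2

theorem lnat_fn_submodular {n : ℕ} (f : (Fin n → ℤ) → EReal)
    (hfbot : ∀ x, f x ≠ ⊥) (hf : IsLNatFn f) :
    ∀ x y : Fin n → ℤ, f (x ⊔ y) + f (x ⊓ y) ≤ f x + f y := by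
  intro x y
  exact lnat_aux f hfbot hf (Finset.univ.sup fun i => (x i - y i).natAbs) x y
    (fun i => Finset.le_sup (f := fun i => (x i - y i).natAbs) (Finset.mem_univ i))
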